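/- Suppose $f:\mathbb{R}^d\to[0,\infty)$ satisfies: (i) $f(y)\leq c_1$ for all $y$; (ii) $f$ is $C^1$ with $|\nabla f(y)|\leq c_1$ for all $y$; (iii) $\int_{\mathbb{R}^d}|y|^{2n}f(y)\,dy\leq c(n)$ for every $n\in\mathbb{N}$. Then for every $m\geq 1$ there exists a constant $C(m)$ (depending only on $m$, the $c(n)$'s, $c_1$, and $d$) such that $f(y)\leq C(m)(1+|y|)^{-m}$ for all $y\in\mathbb{R}^d$. -/

import Mathlib

open MeasureTheory Set Metric ENNReal NNReal

/-- Picard's Lemma 9: If `f ≥ 0` is bounded by `c₁`, is `C¹` with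
gradient bounded by `c₁`, and has all even moments `∫ |y|^{2n} f(y) dy ≤ c(n)`,
then for every `m ≥ 1` there is `C(m)` with `f(y) ≤ C(m) (1+|y|)^{-m}`. -/
theorem stmt7 (d : ℕ) (hd : 1 ≤ d)
    (f : EuclideanSpace ℝ (Fin d) → ℝ) (c₁ : ℝ) (hc₁ : 0 < c₁)
    (cfun : ℕ → ℝ)
    (hf0 : ∀ y, 0 ≤ f y)
    (hfb : ∀ y, f y ≤ c₁)
    (hf1 : ContDiff ℝ 1 f)
    (hgrad : ∀ y, ‖fderiv ℝ f y‖ ≤ c₁)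
    (hmom : ∀ n : ℕ, ∫⁻ y, ENNReal.ofReal (‖y‖ ^ (2 * n) * f y) ≤ ENNReal.ofReal (cfun n)) :
    ∀ m : ℝ, 1 ≤ m → ∃ C : ℝ, 0 < C ∧
      ∀ y, f y ≤ C * (1 + ‖y‖) ^ (-m) := by
  intro m hm
  have hm0 : (0:ℝ) ≤ m := le_trans zero_le_one hm
  -- Lipschitz continuity of f with constant c₁
  have hlipW : LipschitzWith ⟨c₁, hc₁.le⟩ f := by
    apply lipschitzWith_of_nnnorm_fderiv_le (hf1.differentiable one_ne_zero)
    intro x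
    exact hgrad x
  have hlip : ∀ x y : EuclideanSpace ℝ (Fin d), |f x - f y| ≤ c₁ * ‖x - y‖ := by
    intro x y
    have := hlipW.dist_le_mul x y
    rwa [Real.dist_eq, dist_eq_norm] at this
  -- the volume of the unit ball
  set V : ℝ≥0∞ := volume (ball (0 : EuclideanSpace ℝ (Fin d)) 1) with hVdef
  have hV0 : V ≠ 0 := (measure_ball_pos volume _ one_pos).ne'
  have hVtop : V ≠ ⊤ := measure_ball_lt_top.ne
  have hVpos : 0 < V.toReal := ENNReal.toReal_pos hV0 hVtop
  -- choice of the moment index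
  set n : ℕ := ⌈m * (d + 1)⌉₊ with hndef
  have hn : m * (d + 1) ≤ (2 * n : ℕ) := by
    have h1 : m * (d + 1) ≤ (n : ℝ) := Nat.le_ceil _
    have h2 : (n : ℝ) ≤ ((2 * n : ℕ) : ℝ) := by
      push_cast; nlinarith [Nat.cast_nonneg (α := ℝ) n]
    linarith
  -- the key constant
  set K : ℝ := max (cfun n) 0 * 2 ^ (2 * n) * 2 * (2 * c₁) ^ d / V.toReal with hKdef
  have hK0 : 0 ≤ K := by
    apply div_nonneg _ hVpos.le
    positivity
  -- key estimate at points of norm at least 1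
  have key : ∀ y₀ : EuclideanSpace ℝ (Fin d), 1 ≤ ‖y₀‖ →
      f y₀ ^ (d + 1) * ‖y₀‖ ^ (2 * n) ≤ K := by
    intro y₀ hy₀
    set a := f y₀ with hadef
    rcases eq_or_lt_of_le (hf0 y₀) with h0 | ha
    · have : a = 0 := hadef.trans h0.symm
      rw [this]
      simp only [ne_eq, Nat.add_eq_zero, one_ne_zero, and_false, not_false_eq_true,
        zero_pow, zero_mul]
      exact hK0
    set r : ℝ := a / (2 * c₁) with hrdef
    have hr0 : 0 < r := div_pos ha (by linarith)
    have hr2 : r ≤ 1 / 2 := by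
      rw [hrdef, div_le_div_iff₀ (by linarith) (by norm_num)]
      have := hfb y₀
      linarith
    -- pointwise lower bound on the ball
    set c : ℝ := (‖y₀‖ / 2) ^ (2 * n) * (a / 2) with hcdef
    have hc0 : 0 ≤ c := by positivity
    have hlb : ∀ z ∈ ball y₀ r, c ≤ ‖z‖ ^ (2 * n) * f z := by
      intro z hz
      rw [mem_ball, dist_eq_norm] at hz
      have hfz : a / 2 ≤ f z := by
        have h1 := hlip y₀ z
        have h2 : |f y₀ - f z| ≤ c₁ * r := by
          refine h1.trans ?_
          have : ‖y₀ - z‖ = ‖z - y₀‖ := norm_sub_rev _ _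
          rw [this]
          exact mul_le_mul_of_nonneg_left hz.le hc₁.le
        have h3 : c₁ * r = a / 2 := by
          rw [hrdef]; field_simp
        rw [h3] at h2
        have := abs_le.mp h2
        linarith [this.1]
      have hz2 : ‖y₀‖ / 2 ≤ ‖z‖ := by
        have h1 : ‖y₀‖ - ‖z‖ ≤ ‖y₀ - z‖ := norm_sub_norm_le _ _
        have h2 : ‖y₀ - z‖ < r := by rwa [norm_sub_rev]
        have : r ≤ ‖y₀‖ / 2 := le_trans hr2 (by linarith)
        linarith
      have h4 : (‖y₀‖ / 2) ^ (2 * n) ≤ ‖z‖ ^ (2 * n) :=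
        pow_le_pow_left₀ (by positivity) hz2 _
      calc c ≤ ‖z‖ ^ (2 * n) * (a / 2) :=
            mul_le_mul_of_nonneg_right h4 (by linarith)
        _ ≤ ‖z‖ ^ (2 * n) * f z :=
            mul_le_mul_of_nonneg_left hfz (by positivity)
    -- integral estimate
    have hmeas : Measurable fun z : EuclideanSpace ℝ (Fin d) =>
        ENNReal.ofReal (‖z‖ ^ (2 * n) * f z) :=
      (ENNReal.continuous_ofReal.comp
        ((continuous_norm.pow _).mul hf1.continuous)).measurable
    have hint : ENNReal.ofReal c * volume (ball y₀ r) ≤ ENNReal.ofReal (cfun n) := by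
      calc ENNReal.ofReal c * volume (ball y₀ r)
          = ∫⁻ _ in ball y₀ r, ENNReal.ofReal c := (setLIntegral_const _ _).symm
        _ ≤ ∫⁻ z in ball y₀ r, ENNReal.ofReal (‖z‖ ^ (2 * n) * f z) :=
            setLIntegral_mono hmeas fun z hz => ENNReal.ofReal_le_ofReal (hlb z hz)
        _ ≤ ∫⁻ z, ENNReal.ofReal (‖z‖ ^ (2 * n) * f z) := setLIntegral_le_lintegral _ _
        _ ≤ ENNReal.ofReal (cfun n) := hmom n
    haveI : Nontrivial (EuclideanSpace ℝ (Fin d)) :=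
      Module.nontrivial_of_finrank_pos (R := ℝ)
        (by rw [finrank_euclideanSpace_fin]; omega)
    have hball : volume (ball y₀ r) = ENNReal.ofReal (r ^ d) * V := by
      rw [Measure.addHaar_ball volume y₀ hr0.le, finrank_euclideanSpace_fin]
    rw [hball, ← mul_assoc, ← ENNReal.ofReal_mul hc0] at hint
    -- pass to real numbers
    have hreal : c * r ^ d * V.toReal ≤ max (cfun n) 0 := by
      have h1 := ENNReal.toReal_mono ENNReal.ofReal_ne_top hint
      rw [ENNReal.toReal_mul, ENNReal.toReal_ofReal (by positivity),
        ENNReal.toReal_ofReal'] at h1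
      exact h1
    -- algebra
    rw [hKdef, le_div_iff₀ hVpos]
    have h2c : (2 * c₁ : ℝ) ≠ 0 := by positivity
    have h4 : a ^ (d + 1) * ‖y₀‖ ^ (2 * n)
        = c * r ^ d * (2 ^ (2 * n) * 2 * (2 * c₁) ^ d) := by
      rw [hcdef, hrdef, div_pow, div_pow]
      field_simp
      ring
    calc a ^ (d + 1) * ‖y₀‖ ^ (2 * n) * V.toReal
        = (c * r ^ d * V.toReal) * (2 ^ (2 * n) * 2 * (2 * c₁) ^ d) := by
          rw [h4]; ring
      _ ≤ max (cfun n) 0 * (2 ^ (2 * n) * 2 * (2 * c₁) ^ d) :=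
          mul_le_mul_of_nonneg_right hreal (by positivity)
      _ = max (cfun n) 0 * 2 ^ (2 * n) * 2 * (2 * c₁) ^ d := by ring
  -- final constant
  refine ⟨2 ^ m * (max 1 K + c₁), by positivity, ?_⟩
  intro y
  have hb : (0:ℝ) < 1 + ‖y‖ := by positivity
  have hbm : (0:ℝ) < (1 + ‖y‖) ^ m := Real.rpow_pos_of_pos hb m
  rw [Real.rpow_neg hb.le, mul_comm (2 ^ m * (max 1 K + c₁)), ← div_eq_inv_mul,
    le_div_iff₀ hbm, mul_comm (f y)]
  -- suffices: (1+‖y‖)^m * f y ≤ 2^m * (max 1 K + c₁)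
  rcases lt_or_ge ‖y‖ 1 with hy | hy
  · have h1 : (1 + ‖y‖ : ℝ) ^ m ≤ 2 ^ m :=
      Real.rpow_le_rpow hb.le (by linarith) hm0
    have h2 : (1 + ‖y‖) ^ m * f y ≤ 2 ^ m * c₁ :=
      mul_le_mul h1 (hfb y) (hf0 y) (by positivity)
    have h3 : (0:ℝ) < 2 ^ m := Real.rpow_pos_of_pos two_pos m
    nlinarith [le_max_left (1:ℝ) K, h3]
  · have hyp : (0:ℝ) < ‖y‖ := lt_of_lt_of_le one_pos hy
    -- f y * ‖y‖^m ≤ max 1 K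
    have hz : f y * ‖y‖ ^ m ≤ max 1 K := by
      set z : ℝ := f y * ‖y‖ ^ m with hzdef
      have hz0 : 0 ≤ z := mul_nonneg (hf0 y) (Real.rpow_pos_of_pos hyp m).le
      have hzd : z ^ (d + 1) ≤ K := by
        have h1 : z ^ (d + 1) = f y ^ (d + 1) * ‖y‖ ^ (m * (d + 1)) := by
          rw [hzdef, mul_pow, ← Real.rpow_natCast (‖y‖ ^ m) (d+1), ← Real.rpow_mul hyp.le]
          push_cast
          ring_nf
        have h2 : ‖y‖ ^ (m * (d + 1)) ≤ ‖y‖ ^ ((2 * n : ℕ) : ℝ) :=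
          Real.rpow_le_rpow_of_exponent_le hy hn
        rw [Real.rpow_natCast] at h2
        calc z ^ (d + 1) = f y ^ (d + 1) * ‖y‖ ^ (m * (d + 1)) := h1
          _ ≤ f y ^ (d + 1) * ‖y‖ ^ (2 * n) :=
              mul_le_mul_of_nonneg_left h2 (pow_nonneg (hf0 y) _)
          _ ≤ K := key y hy
      rcases le_or_gt z 1 with h | h
      · exact le_trans h (le_max_left _ _)
      · refine le_trans ?_ (le_max_right 1 K)
        calc z ≤ z ^ (d + 1) := le_self_pow₀ h.le (Nat.succ_ne_zero d)
          _ ≤ K := hzd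
    have h1 : (1 + ‖y‖ : ℝ) ^ m ≤ (2 * ‖y‖) ^ m :=
      Real.rpow_le_rpow hb.le (by linarith) hm0
    have h2 : ((2:ℝ) * ‖y‖) ^ m = 2 ^ m * ‖y‖ ^ m :=
      Real.mul_rpow (by norm_num) hyp.le
    have h3 : (0:ℝ) < 2 ^ m := Real.rpow_pos_of_pos two_pos m
    calc (1 + ‖y‖) ^ m * f y ≤ (2 * ‖y‖) ^ m * f y :=
        mul_le_mul_of_nonneg_right h1 (hf0 y)
      _ = 2 ^ m * (f y * ‖y‖ ^ m) := by rw [h2]; ring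
      _ ≤ 2 ^ m * (max 1 K) := mul_le_mul_of_nonneg_left hz h3.le
      _ ≤ 2 ^ m * (max 1 K + c₁) := by nlinarith [le_max_left (1:ℝ) K]
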